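/- Let κ₁, κ₂ > 0 and let s₁, s₂, x₁, x₂ : ℝ → ℝ be differentiable functions with s₁(t), s₂(t) > 0 and (s₁(t), x₁(t)) ≠ (s₂(t), x₂(t)) for all t. Set rₖ(t) := √(sₖ(t)). If for each k ∈ {1,2} and j ≠ k the equation ṡₖ(t) = 4 κⱼ r₁(t) r₂(t) (xₖ(t) − xⱼ(t)) ∫₀^{π/2} cos(2σ) / Δ₁₂(σ, t)^{3/2} dσ holds for all t, then the function G(t) := κ₁ s₁(t) + κ₂ s₂(t) is constant. -/

import Mathlib

open Real intervalIntegral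

/-- If differentiable functions `s₁, s₂, x₁, x₂` (with `s₁, s₂ > 0` and the two rings never
coinciding) satisfy the radial equations of motion of two coaxial vortex rings of strengths
`κ₁, κ₂ > 0`, then `G(t) := κ₁ s₁(t) + κ₂ s₂(t)` is constant. Here `rₖ(t) = √(sₖ(t))` and
`Δ₁₂(σ,t) = (r₁(t) − r₂(t))² + (x₁(t) − x₂(t))² + 4 r₁(t) r₂(t) sin²σ`. -/
theorem stmt2 (κ₁ κ₂ : ℝ) (hκ₁ : 0 < κ₁) (hκ₂ : 0 < κ₂)
    (s₁ s₂ x₁ x₂ : ℝ → ℝ)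
    (hs₁ : Differentiable ℝ s₁) (hs₂ : Differentiable ℝ s₂)
    (hx₁ : Differentiable ℝ x₁) (hx₂ : Differentiable ℝ x₂)
    (hpos₁ : ∀ t, 0 < s₁ t) (hpos₂ : ∀ t, 0 < s₂ t)
    (hne : ∀ t, (s₁ t, x₁ t) ≠ (s₂ t, x₂ t))
    (hode₁ : ∀ t, deriv s₁ t =
      4 * κ₂ * Real.sqrt (s₁ t) * Real.sqrt (s₂ t) * (x₁ t - x₂ t) *
        ∫ σ in (0:ℝ)..(π/2), Real.cos (2 * σ) /
          ((Real.sqrt (s₁ t) - Real.sqrt (s₂ t)) ^ 2 + (x₁ t - x₂ t) ^ 2 +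
            4 * Real.sqrt (s₁ t) * Real.sqrt (s₂ t) * Real.sin σ ^ 2) ^ ((3:ℝ)/2))
    (hode₂ : ∀ t, deriv s₂ t =
      4 * κ₁ * Real.sqrt (s₁ t) * Real.sqrt (s₂ t) * (x₂ t - x₁ t) *
        ∫ σ in (0:ℝ)..(π/2), Real.cos (2 * σ) /
          ((Real.sqrt (s₁ t) - Real.sqrt (s₂ t)) ^ 2 + (x₁ t - x₂ t) ^ 2 +
            4 * Real.sqrt (s₁ t) * Real.sqrt (s₂ t) * Real.sin σ ^ 2) ^ ((3:ℝ)/2)) :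
    ∀ t t' : ℝ, κ₁ * s₁ t + κ₂ * s₂ t = κ₁ * s₁ t' + κ₂ * s₂ t' := by
  intro t t'
  have hg : Differentiable ℝ (fun t => κ₁ * s₁ t + κ₂ * s₂ t) :=
    (hs₁.const_mul κ₁).add (hs₂.const_mul κ₂)
  have hderiv : ∀ u, deriv (fun t => κ₁ * s₁ t + κ₂ * s₂ t) u = 0 := by
    intro u
    have h1 : deriv (fun t => κ₁ * s₁ t + κ₂ * s₂ t) u
        = κ₁ * deriv s₁ u + κ₂ * deriv s₂ u := by
      rw [deriv_fun_add ((hs₁ u).const_mul κ₁) ((hs₂ u).const_mul κ₂),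
        deriv_const_mul κ₁ (hs₁ u), deriv_const_mul κ₂ (hs₂ u)]
    rw [h1, hode₁ u, hode₂ u]; ring
  have := is_const_of_deriv_eq_zero hg hderiv t t'
  simpa using this
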